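/- Let D ≥ 1 and let S1, S2 be nonempty subsets of Ω = {0, 1, ..., D−1}. If π is a permutation of Ω chosen uniformly at random, then the probability that min(π(S1)) = min(π(S2)) equals the resemblance R = |S1 ∩ S2| / |S1 ∪ S2|. -/

import Mathlib

/-- For `D ≥ 1` and nonempty `S1, S2 ⊆ {0, …, D−1}`, the probability (over a
uniformly random permutation `π` of `{0, …, D−1}`) that `min(π(S1)) = min(π(S2))` equals the
resemblance `R = |S1 ∩ S2| / |S1 ∪ S2|`. -/
theorem stmt0 (D : ℕ) (hD : 1 ≤ D) (S1 S2 : Finset (Fin D))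
    (h1 : S1.Nonempty) (h2 : S2.Nonempty) :
    ((Finset.univ.filter (fun π : Equiv.Perm (Fin D) =>
        (S1.image π).min' (h1.image π) = (S2.image π).min' (h2.image π))).card : ℝ)
      / (Fintype.card (Equiv.Perm (Fin D)) : ℝ)
    = ((S1 ∩ S2).card : ℝ) / ((S1 ∪ S2).card : ℝ) := by
  classical
  set U : Finset (Fin D) := S1 ∪ S2 with hUdef
  have hUne : U.Nonempty := h1.mono Finset.subset_union_left
  have min'_congr : ∀ (A B : Finset (Fin D)) (hA : A.Nonempty) (hB : B.Nonempty),
      A = B → A.min' hA = B.min' hB := by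
    rintro A B hA hB rfl; rfl
  set am : Equiv.Perm (Fin D) → Fin D :=
    fun π => π.symm ((U.image π).min' (hUne.image π)) with ham
  have ham_mem : ∀ π : Equiv.Perm (Fin D), am π ∈ U := by
    intro π
    have h := (U.image π).min'_mem (hUne.image π)
    obtain ⟨x, hx, hxe⟩ := Finset.mem_image.mp h
    simpa [ham, ← hxe] using hx
  have ham_min : ∀ π : Equiv.Perm (Fin D), π (am π) = (U.image π).min' (hUne.image π) :=
    fun π => π.apply_symm_apply _
  -- characterization of the event
  have hkey : (Finset.univ.filter (fun π : Equiv.Perm (Fin D) =>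
        (S1.image π).min' (h1.image π) = (S2.image π).min' (h2.image π)))
      = Finset.univ.filter (fun π : Equiv.Perm (Fin D) => am π ∈ S1 ∩ S2) := by
    ext π
    simp only [Finset.mem_filter, Finset.mem_univ, true_and, Finset.mem_inter]
    constructor
    · intro h
      have hsub1 : S1.image π ⊆ U.image π := Finset.image_subset_image Finset.subset_union_left
      have hsub2 : S2.image π ⊆ U.image π := Finset.image_subset_image Finset.subset_union_right
      have hmemU : (U.image π).min' (hUne.image π) ∈ S1.image π ∪ S2.image π := by
        have := (U.image π).min'_mem (hUne.image π)
        simpa [hUdef, Finset.image_union] using this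
      -- min of union equals common min
      have hm1 : (U.image π).min' (hUne.image π) = (S1.image π).min' (h1.image π) := by
        apply le_antisymm
        · exact Finset.min'_le _ _ (hsub1 ((S1.image π).min'_mem (h1.image π)))
        · rcases Finset.mem_union.mp hmemU with hm | hm
          · exact Finset.min'_le _ _ hm
          · rw [h]; exact Finset.min'_le _ _ hm
      have hmem1 : π (am π) ∈ S1.image π := by
        rw [ham_min π, hm1]; exact (S1.image π).min'_mem _
      have hmem2 : π (am π) ∈ S2.image π := by
        rw [ham_min π, hm1, h]; exact (S2.image π).min'_mem _
      obtain ⟨x, hx, hxe⟩ := Finset.mem_image.mp hmem1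
      obtain ⟨y, hy, hye⟩ := Finset.mem_image.mp hmem2
      exact ⟨by rwa [← π.injective hxe], by rwa [← π.injective hye]⟩
    · rintro ⟨hx1, hx2⟩
      have hsub1 : S1.image π ⊆ U.image π := Finset.image_subset_image Finset.subset_union_left
      have hsub2 : S2.image π ⊆ U.image π := Finset.image_subset_image Finset.subset_union_right
      have e1 : (S1.image π).min' (h1.image π) = π (am π) := by
        apply le_antisymm
        · exact Finset.min'_le _ _ (Finset.mem_image_of_mem π hx1)
        · rw [ham_min π]
          exact Finset.min'_le _ _ (hsub1 ((S1.image π).min'_mem _))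
      have e2 : (S2.image π).min' (h2.image π) = π (am π) := by
        apply le_antisymm
        · exact Finset.min'_le _ _ (Finset.mem_image_of_mem π hx2)
        · rw [ham_min π]
          exact Finset.min'_le _ _ (hsub2 ((S2.image π).min'_mem _))
      rw [e1, e2]
  -- swap symmetry of fibers
  have himg : ∀ a b : Fin D, a ∈ U → b ∈ U → U.image (Equiv.swap a b) = U := by
    intro a b ha hb
    apply Finset.eq_of_subset_of_card_le
    · intro x hx
      obtain ⟨y, hy, rfl⟩ := Finset.mem_image.mp hx
      rcases eq_or_ne y a with rfl | hya
      · simpa [Equiv.swap_apply_left] using hb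
      rcases eq_or_ne y b with rfl | hyb
      · simpa [Equiv.swap_apply_right] using ha
      · simpa [Equiv.swap_apply_of_ne_of_ne hya hyb] using hy
    · rw [Finset.card_image_of_injective _ (Equiv.injective _)]
  have ham_swap : ∀ (π : Equiv.Perm (Fin D)) (a b : Fin D), a ∈ U → b ∈ U →
      am (π * Equiv.swap a b) = Equiv.swap a b (am π) := by
    intro π a b ha hb
    have himg' : U.image ⇑(π * Equiv.swap a b) = U.image ⇑π := by
      have : ⇑(π * Equiv.swap a b) = ⇑π ∘ ⇑(Equiv.swap a b) := rfl
      rw [this, ← Finset.image_image, himg a b ha hb]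
    have hmin : (U.image ⇑(π * Equiv.swap a b)).min' (hUne.image _)
        = (U.image ⇑π).min' (hUne.image _) := min'_congr _ _ _ _ himg'
    simp only [ham]
    rw [hmin]
    rfl
  obtain ⟨a0, ha0⟩ := hUne
  set c : ℕ := (Finset.univ.filter (fun π : Equiv.Perm (Fin D) => am π = a0)).card with hc
  have hfiber : ∀ a ∈ U, (Finset.univ.filter (fun π : Equiv.Perm (Fin D) => am π = a)).card = c := by
    intro a ha
    apply Finset.card_bij' (fun π _ => π * Equiv.swap a a0) (fun π _ => π * Equiv.swap a a0)
    · intro π hπ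
      simp only [Finset.mem_filter, Finset.mem_univ, true_and] at hπ ⊢
      rw [ham_swap π a a0 ha ha0, hπ, Equiv.swap_apply_left]
    · intro π hπ
      simp only [Finset.mem_filter, Finset.mem_univ, true_and] at hπ ⊢
      rw [ham_swap π a a0 ha ha0, hπ, Equiv.swap_apply_right]
    · intro π _
      rw [mul_assoc, Equiv.swap_mul_self, mul_one]
    · intro π _
      rw [mul_assoc, Equiv.swap_mul_self, mul_one]
  have hN : Fintype.card (Equiv.Perm (Fin D)) = U.card * c := by
    rw [← Finset.card_univ,
      Finset.card_eq_sum_card_fiberwise (f := am) (t := U) (fun π _ => ham_mem π),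
      Finset.sum_congr rfl (fun a ha => hfiber a ha), Finset.sum_const, smul_eq_mul]
  have hNum : (Finset.univ.filter (fun π : Equiv.Perm (Fin D) =>
        (S1.image π).min' (h1.image π) = (S2.image π).min' (h2.image π))).card
      = (S1 ∩ S2).card * c := by
    rw [hkey,
      Finset.card_eq_sum_card_fiberwise (f := am) (t := S1 ∩ S2)
        (s := Finset.univ.filter (fun π : Equiv.Perm (Fin D) => am π ∈ S1 ∩ S2))
        (fun π hπ => (Finset.mem_filter.mp hπ).2)]
    have : ∀ a ∈ S1 ∩ S2,
        ((Finset.univ.filter (fun π : Equiv.Perm (Fin D) => am π ∈ S1 ∩ S2)).filter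
          (fun π => am π = a)).card = c := by
      intro a ha
      rw [Finset.filter_filter]
      have hset : Finset.filter (fun π : Equiv.Perm (Fin D) => am π ∈ S1 ∩ S2 ∧ am π = a)
          Finset.univ = Finset.filter (fun π => am π = a) Finset.univ := by
        ext π
        simp only [Finset.mem_filter, Finset.mem_univ, true_and]
        exact ⟨fun h => h.2, fun h => ⟨h ▸ ha, h⟩⟩
      rw [hset]
      exact hfiber a (Finset.mem_union_left _ (Finset.mem_inter.mp ha).1)
    rw [Finset.sum_congr rfl this, Finset.sum_const, smul_eq_mul]
  have hc0 : c ≠ 0 := by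
    intro h
    have hpos := Fintype.card_pos (α := Equiv.Perm (Fin D))
    rw [hN, h, mul_zero] at hpos
    exact lt_irrefl 0 hpos
  have hU0 : (U.card : ℝ) ≠ 0 := by
    exact_mod_cast (Finset.card_pos.mpr ⟨a0, ha0⟩).ne'
  rw [hNum, hN]
  push_cast
  rw [mul_div_mul_right _ _ (by exact_mod_cast hc0 : (c : ℝ) ≠ 0)]
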